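/- Let (p̂_n)_{n≥1} be the real sequence defined by p̂_1 = 1 and p̂_n = (1/(n−1)) Σ_{j=1}^{n−1} (1 − p̂_j) p̂_{n−j} for n ≥ 2. Then for every real z with −1 < z < 1, the power series P̂(z) = Σ_{k≥1} p̂_k z^k converges and P̂(z) = z / ((1 − z)(1 − log(1 − z))). -/

import Mathlib

open MeasureTheory ProbabilityTheory Filter Asymptotics

noncomputable def rrtMu (k : ℕ) : ℝ := 1 / ((k : ℝ) * ((k : ℝ) - 1))

noncomputable def rrtLam (k : ℕ) : ℝ := if k = 0 then 1 else 1 / (k : ℝ)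

lemma rrtMu_one : rrtMu 1 = 0 := by simp [rrtMu]

lemma rrtLam_zero : rrtLam 0 = 1 := by simp [rrtLam]

lemma rrtLam_step {k : ℕ} (hk : 1 ≤ k) : rrtLam k = rrtLam (k - 1) - rrtMu k := by
  rcases k with _ | k
  · omega
  · rcases k with _ | a
    · simp [rrtLam, rrtMu]
    · have h1 : ((a : ℝ) + 1) ≠ 0 := by positivity
      have h2 : ((a : ℝ) + 2) ≠ 0 := by positivity
      simp only [rrtLam, rrtMu, Nat.add_sub_cancel]
      push_cast
      have h3 : ((a : ℝ) + 1 + 1 - 1) = (a : ℝ) + 1 := by ring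
      rw [h3]
      field_simp
      ring

lemma rrt_bounds (p : ℕ → ℝ) (h1 : p 1 = 1)
    (hrec : ∀ n : ℕ, 2 ≤ n →
      p n = (1 / ((n : ℝ) - 1)) * ∑ j ∈ Finset.Icc 1 (n - 1), (1 - p j) * p (n - j)) :
    ∀ n, 1 ≤ n → 0 ≤ p n ∧ p n ≤ 1 := by
  intro n
  induction n using Nat.strong_induction_on with
  | _ n ih =>
    intro hn
    rcases eq_or_lt_of_le hn with h | h
    · rw [← h, h1]; norm_num
    · have h2 : 2 ≤ n := h
      have hpos : (0 : ℝ) < (n : ℝ) - 1 := by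
        have : (2 : ℝ) ≤ (n : ℝ) := by exact_mod_cast h2
        linarith
      have hterm : ∀ j ∈ Finset.Icc 1 (n - 1),
          0 ≤ (1 - p j) * p (n - j) ∧ (1 - p j) * p (n - j) ≤ 1 := by
        intro j hj
        simp only [Finset.mem_Icc] at hj
        have hj1 := ih j (by omega) (by omega)
        have hj2 := ih (n - j) (by omega) (by omega)
        constructor
        · exact mul_nonneg (by linarith [hj1.2]) hj2.1
        · calc (1 - p j) * p (n - j) ≤ 1 * 1 := by
                apply mul_le_mul (by linarith [hj1.1]) hj2.2 hj2.1 (by norm_num)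
          _ = 1 := by norm_num
      rw [hrec n h2]
      have hsum0 : 0 ≤ ∑ j ∈ Finset.Icc 1 (n - 1), (1 - p j) * p (n - j) :=
        Finset.sum_nonneg fun j hj => (hterm j hj).1
      have hsum1 : ∑ j ∈ Finset.Icc 1 (n - 1), (1 - p j) * p (n - j) ≤ (n : ℝ) - 1 := by
        calc ∑ j ∈ Finset.Icc 1 (n - 1), (1 - p j) * p (n - j)
            ≤ ∑ j ∈ Finset.Icc 1 (n - 1), 1 := Finset.sum_le_sum fun j hj => (hterm j hj).2
          _ = ((n : ℝ) - 1) := by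
              rw [Finset.sum_const, Nat.card_Icc]
              have : n - 1 + 1 - 1 = n - 1 := by omega
              rw [this, nsmul_eq_mul, mul_one, Nat.cast_sub (by omega : 1 ≤ n),
                Nat.cast_one]
      constructor
      · exact mul_nonneg (by positivity) hsum0
      · rw [one_div, inv_mul_le_iff₀ hpos]
        linarith

lemma rrt_main (p : ℕ → ℝ) (h1 : p 1 = 1)
    (hrec : ∀ n : ℕ, 2 ≤ n →
      p n = (1 / ((n : ℝ) - 1)) * ∑ j ∈ Finset.Icc 1 (n - 1), (1 - p j) * p (n - j)) :
    ∀ n : ℕ, (2 ≤ n → p n = ∑ j ∈ Finset.Icc 1 (n - 2), p j * rrtMu (n - j)) ∧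
      (1 ≤ n → ∑ j ∈ Finset.Icc 1 n, p j * rrtLam (n - j) = 1) := by
  have hp2 : p 2 = 0 := by
    have := hrec 2 le_rfl
    norm_num [h1] at this
    exact this
  intro n
  induction n using Nat.strong_induction_on with
  | _ n ih =>
    have hG : 2 ≤ n → p n = ∑ j ∈ Finset.Icc 1 (n - 2), p j * rrtMu (n - j) := by
      intro h2
      rcases eq_or_lt_of_le h2 with heq | h3
      · rw [← heq]
        simpa using hp2
      · obtain ⟨m, rfl⟩ : ∃ m, n = m + 3 := ⟨n - 3, by omega⟩
        have e2 : m + 3 - 2 = m + 1 := by omega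
        rw [e2]
        set S := ∑ j ∈ Finset.Icc 1 (m + 1), p j * rrtMu (m + 3 - j) with hS
        have step1 : ((m : ℝ) + 2) * S
            = (∑ j ∈ Finset.Icc 1 (m + 1), p j * rrtLam (m + 2 - j))
              + ∑ j ∈ Finset.Icc 1 (m + 1), (((j : ℝ) - 1) * p j) * rrtMu (m + 3 - j) := by
          rw [hS, Finset.mul_sum, ← Finset.sum_add_distrib]
          refine Finset.sum_congr rfl fun j hj => ?_
          simp only [Finset.mem_Icc] at hj
          obtain ⟨a, ha⟩ : ∃ a, m + 1 = j + a := ⟨m + 1 - j, by omega⟩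
          have e3 : m + 3 - j = a + 2 := by omega
          have e4 : m + 2 - j = a + 1 := by omega
          have e5 : (j : ℝ) = (m : ℝ) + 1 - (a : ℝ) := by
            have h' := congrArg (fun t : ℕ => (t : ℝ)) ha
            push_cast at h'
            linarith
          rw [e3, e4]
          simp only [rrtMu, rrtLam, if_neg (by omega : ¬ (a + 1 = 0))]
          push_cast
          rw [e5]
          have h1' : ((a : ℝ) + 1) ≠ 0 := by positivity
          have h2' : ((a : ℝ) + 2) ≠ 0 := by positivity
          have h3' : ((a : ℝ) + 2 - 1) = (a : ℝ) + 1 := by ring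
          rw [h3']
          field_simp
          ring
        have hD1 : ∑ j ∈ Finset.Icc 1 (m + 2), p j * rrtLam (m + 2 - j) = 1 :=
          (ih (m + 2) (by omega)).2 (by omega)
        have step2 : ∑ j ∈ Finset.Icc 1 (m + 1), p j * rrtLam (m + 2 - j) = 1 - p (m + 2) := by
          rw [show m + 2 = m + 1 + 1 from rfl] at hD1
          rw [Finset.sum_Icc_succ_top (by omega : 1 ≤ m + 1 + 1)
            (fun j => p j * rrtLam (m + 1 + 1 - j))] at hD1
          have e6 : m + 1 + 1 - (m + 1 + 1) = 0 := by omega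
          rw [e6, rrtLam_zero, mul_one] at hD1
          linarith
        have hmul : ∀ j ∈ Finset.Icc 1 (m + 1),
            ((j : ℝ) - 1) * p j = ∑ i ∈ Finset.Icc 1 (j - 1), (1 - p i) * p (j - i) := by
          intro j hj
          simp only [Finset.mem_Icc] at hj
          rcases eq_or_lt_of_le hj.1 with h | h
          · rw [← h]
            simp
          · have hj2 : 2 ≤ j := h
            have hne : ((j : ℝ) - 1) ≠ 0 := by
              have : (2 : ℝ) ≤ (j : ℝ) := by exact_mod_cast hj2
              linarith
            rw [hrec j hj2]
            field_simp
        have step3 : ∑ j ∈ Finset.Icc 1 (m + 1), (((j : ℝ) - 1) * p j) * rrtMu (m + 3 - j)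
            = ∑ i ∈ Finset.Icc 1 m, (1 - p i) * p (m + 3 - i) := by
          rw [Finset.sum_congr rfl fun j hj => by rw [hmul j hj]]
          have swap : ∑ j ∈ Finset.Icc 1 (m + 1),
              (∑ i ∈ Finset.Icc 1 (j - 1), (1 - p i) * p (j - i)) * rrtMu (m + 3 - j)
              = ∑ i ∈ Finset.Icc 1 m, ∑ j ∈ Finset.Icc (i + 1) (m + 1),
                  (1 - p i) * p (j - i) * rrtMu (m + 3 - j) := by
            simp only [Finset.sum_mul]
            exact Finset.sum_comm' (by
              intro j i
              simp only [Finset.mem_Icc]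
              omega)
          rw [swap]
          refine Finset.sum_congr rfl fun i hi => ?_
          simp only [Finset.mem_Icc] at hi
          have hmap : Finset.Icc (i + 1) (m + 1) =
              (Finset.Icc 1 (m + 1 - i)).map (addRightEmbedding i) := by
            rw [Finset.map_add_right_Icc]
            congr 1 <;> omega
          rw [hmap, Finset.sum_map]
          have hGi : p (m + 3 - i)
              = ∑ k ∈ Finset.Icc 1 (m + 1 - i), p k * rrtMu (m + 3 - i - k) := by
            have hg := (ih (m + 3 - i) (by omega)).1 (by omega)
            have e8 : m + 3 - i - 2 = m + 1 - i := by omega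
            rw [e8] at hg
            exact hg
          rw [hGi, Finset.mul_sum]
          refine Finset.sum_congr rfl fun k hk => ?_
          simp only [Finset.mem_Icc] at hk
          have e6 : k + i - i = k := by omega
          have e7 : m + 3 - (k + i) = m + 3 - i - k := by omega
          simp only [addRightEmbedding_apply]
          rw [e6, e7]
          ring
        have step4 : ∑ j ∈ Finset.Icc 1 (m + 2), (1 - p j) * p (m + 3 - j)
            = (∑ i ∈ Finset.Icc 1 m, (1 - p i) * p (m + 3 - i)) + (1 - p (m + 2)) := by
          rw [show m + 2 = m + 1 + 1 from rfl,
            Finset.sum_Icc_succ_top (by omega : 1 ≤ m + 1 + 1)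
              (fun j => (1 - p j) * p (m + 3 - j)),
            Finset.sum_Icc_succ_top (by omega : 1 ≤ m + 1)
              (fun j => (1 - p j) * p (m + 3 - j))]
          have e9 : m + 3 - (m + 1) = 2 := by omega
          have e10 : m + 3 - (m + 1 + 1) = 1 := by omega
          simp only [e9, e10, hp2, h1]
          ring
        have hfin : ((m : ℝ) + 2) * S
            = ∑ j ∈ Finset.Icc 1 (m + 2), (1 - p j) * p (m + 3 - j) := by
          rw [step1, step2, step3, step4]
          ring
        have hr := hrec (m + 3) (by omega)
        have e12 : m + 3 - 1 = m + 2 := by omega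
        have e11 : ((m + 3 : ℕ) : ℝ) - 1 = (m : ℝ) + 2 := by push_cast; ring
        rw [e12, e11, ← hfin] at hr
        rw [hr]
        have hne2 : ((m : ℝ) + 2) ≠ 0 := by positivity
        field_simp
    refine ⟨hG, ?_⟩
    intro h1n
    rcases eq_or_lt_of_le h1n with heq | h2
    · rw [← heq]
      simp [h1, rrtLam_zero]
    · obtain ⟨m, rfl⟩ : ∃ m, n = m + 2 := ⟨n - 2, by omega⟩
      have hGn := hG (by omega)
      have em : m + 2 - 2 = m := by omega
      rw [em] at hGn
      rw [show m + 2 = m + 1 + 1 from rfl,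
        Finset.sum_Icc_succ_top (by omega : 1 ≤ m + 1 + 1)
          (fun j => p j * rrtLam (m + 1 + 1 - j))]
      have e0 : m + 1 + 1 - (m + 1 + 1) = 0 := by omega
      rw [e0, rrtLam_zero, mul_one]
      have hpt : ∀ j ∈ Finset.Icc 1 (m + 1),
          p j * rrtLam (m + 1 + 1 - j) = p j * rrtLam (m + 1 - j) - p j * rrtMu (m + 2 - j) := by
        intro j hj
        simp only [Finset.mem_Icc] at hj
        have h := rrtLam_step (k := m + 2 - j) (by omega)
        have e : m + 2 - j - 1 = m + 1 - j := by omega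
        rw [e] at h
        rw [show m + 1 + 1 - j = m + 2 - j from rfl, h]
        ring
      rw [Finset.sum_congr rfl hpt, Finset.sum_sub_distrib]
      have hD := (ih (m + 1) (by omega)).2 (by omega)
      have hMu : ∑ j ∈ Finset.Icc 1 (m + 1), p j * rrtMu (m + 2 - j) = p (m + 2) := by
        rw [Finset.sum_Icc_succ_top (by omega : 1 ≤ m + 1)
          (fun j => p j * rrtMu (m + 2 - j))]
        have e1 : m + 2 - (m + 1) = 1 := by omega
        rw [e1, rrtMu_one, mul_zero, add_zero, ← hGn]
      rw [hD, hMu]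
      ring

theorem rrt_generating_function (p : ℕ → ℝ) (h1 : p 1 = 1)
    (hrec : ∀ n : ℕ, 2 ≤ n →
      p n = (1 / ((n : ℝ) - 1)) * ∑ j ∈ Finset.Icc 1 (n - 1), (1 - p j) * p (n - j))
    (z : ℝ) (hz1 : -1 < z) (hz2 : z < 1) :
    HasSum (fun k : ℕ => p (k + 1) * z ^ (k + 1))
      (z / ((1 - z) * (1 - Real.log (1 - z)))) := by
  have hdag : ∀ m : ℕ, 1 ≤ m → ∑ j ∈ Finset.Icc 1 m, p j * rrtLam (m - j) = 1 :=
    fun m hm => (rrt_main p h1 hrec m).2 hm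
  have hb := rrt_bounds p h1 hrec
  have hzabs : |z| < 1 := abs_lt.mpr ⟨hz1, hz2⟩
  set a : ℕ → ℝ := fun k => if k = 0 then 0 else p k with ha
  have haabs : ∀ k, |a k| ≤ 1 := by
    intro k
    rcases Nat.eq_zero_or_pos k with h | h
    · simp [ha, h]
    · have hbk := hb k h
      rw [ha]
      simp only [if_neg (by omega : ¬ (k = 0))]
      rw [abs_le]
      constructor <;> linarith [hbk.1, hbk.2]
  have hlabs : ∀ k, |rrtLam k| ≤ 1 := by
    intro k
    rcases Nat.eq_zero_or_pos k with h | h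
    · simp [h, rrtLam_zero]
    · rw [rrtLam, if_neg (by omega : ¬ (k = 0)), abs_le]
      have h1' : (1 : ℝ) ≤ (k : ℝ) := by exact_mod_cast h
      constructor
      · have : (0:ℝ) ≤ 1 / (k : ℝ) := by positivity
        linarith
      · rw [div_le_one (by linarith)]
        linarith
  set f : ℕ → ℝ := fun k => a k * z ^ k with hf
  set g : ℕ → ℝ := fun k => rrtLam k * z ^ k with hg
  have hgeo : Summable fun k : ℕ => |z| ^ k :=
    summable_geometric_of_abs_lt_one (by rwa [abs_abs])
  have hfs : Summable fun k => ‖f k‖ := by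
    refine Summable.of_nonneg_of_le (fun k => norm_nonneg _) (fun k => ?_) hgeo
    rw [hf]
    simp only [Real.norm_eq_abs, abs_mul, abs_pow]
    calc |a k| * |z| ^ k ≤ 1 * |z| ^ k :=
          mul_le_mul_of_nonneg_right (haabs k) (by positivity)
      _ = |z| ^ k := one_mul _
  have hgs : Summable fun k => ‖g k‖ := by
    refine Summable.of_nonneg_of_le (fun k => norm_nonneg _) (fun k => ?_) hgeo
    rw [hg]
    simp only [Real.norm_eq_abs, abs_mul, abs_pow]
    calc |rrtLam k| * |z| ^ k ≤ 1 * |z| ^ k :=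
          mul_le_mul_of_nonneg_right (hlabs k) (by positivity)
      _ = |z| ^ k := one_mul _
  have hlog := Real.hasSum_pow_div_log_of_abs_lt_one hzabs
  have hgsum : HasSum g (1 - Real.log (1 - z)) := by
    have h2 : (fun n : ℕ => g (n + 1)) = fun n : ℕ => z ^ (n + 1) / (((n : ℕ) + 1 : ℕ) : ℝ) := by
      funext n
      rw [hg]
      simp only [rrtLam, if_neg (Nat.succ_ne_zero n), one_div]
      ring
    have h3 : HasSum (fun n : ℕ => g (n + 1)) (-Real.log (1 - z)) := by
      rw [h2]
      exact_mod_cast hlog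
    have h4 := (hasSum_nat_add_iff (f := g) 1).mp h3
    simp only [Finset.range_one, Finset.sum_singleton] at h4
    have hg0 : g 0 = 1 := by rw [hg]; simp [rrtLam_zero]
    rw [hg0] at h4
    convert h4 using 1
    · rfl
    · ring
  have hF : HasSum (fun n : ℕ => (if n = 0 then (0:ℝ) else 1) * z ^ n) (z / (1 - z)) := by
    have h5 := (hasSum_geometric_of_abs_lt_one hzabs).mul_left z
    have h6 : (fun n : ℕ => (if n + 1 = 0 then (0:ℝ) else 1) * z ^ (n + 1))
        = fun n : ℕ => z * z ^ n := by
      funext n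
      rw [if_neg (Nat.succ_ne_zero n)]
      ring
    have h7 : HasSum (fun n : ℕ => (if n + 1 = 0 then (0:ℝ) else 1) * z ^ (n + 1))
        (z * (1 - z)⁻¹) := by
      rw [h6]
      exact h5
    have h8 := (hasSum_nat_add_iff
      (f := fun n : ℕ => (if n = 0 then (0:ℝ) else 1) * z ^ n) 1).mp h7
    norm_num at h8
    have hsplit : (fun n : ℕ => (if n = 0 then (0:ℝ) else 1) * z ^ n)
        = fun n : ℕ => if n = 0 then (0:ℝ) else z ^ n := by
      funext n
      split <;> simp
    rw [hsplit, div_eq_mul_inv]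
    exact h8
  have hcp := tsum_mul_tsum_eq_tsum_sum_range_of_summable_norm hfs hgs
  have hinner : ∀ n : ℕ, (∑ k ∈ Finset.range (n + 1), f k * g (n - k))
      = (if n = 0 then (0:ℝ) else 1) * z ^ n := by
    intro n
    have hterm : ∀ k ∈ Finset.range (n + 1),
        f k * g (n - k) = (a k * rrtLam (n - k)) * z ^ n := by
      intro k hk
      simp only [Finset.mem_range] at hk
      rw [hf, hg]
      have hzz : z ^ k * z ^ (n - k) = z ^ n := by
        rw [← pow_add]
        congr 1
        omega
      calc a k * z ^ k * (rrtLam (n - k) * z ^ (n - k))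
          = (a k * rrtLam (n - k)) * (z ^ k * z ^ (n - k)) := by ring
        _ = (a k * rrtLam (n - k)) * z ^ n := by rw [hzz]
    rw [Finset.sum_congr rfl hterm, ← Finset.sum_mul]
    congr 1
    rcases Nat.eq_zero_or_pos n with h | h
    · subst h
      simp [ha]
    · rw [if_neg (by omega : ¬ (n = 0)), Finset.sum_range_succ']
      have h0 : a 0 * rrtLam (n - 0) = 0 := by simp [ha]
      rw [h0, add_zero]
      have hd := hdag n h
      rw [show Finset.Icc 1 n = Finset.Ico 1 (n + 1) from (Finset.Ico_add_one_right_eq_Icc 1 n).symm,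
        Finset.sum_Ico_eq_sum_range] at hd
      have en : n + 1 - 1 = n := by omega
      rw [en] at hd
      rw [← hd]
      refine Finset.sum_congr rfl fun i _ => ?_
      rw [show 1 + i = i + 1 from Nat.add_comm 1 i, ha]
      simp only [if_neg (Nat.succ_ne_zero i)]
  have hgt : ∑' k, g k = 1 - Real.log (1 - z) := hgsum.tsum_eq
  have hFt : ∑' n, (if n = 0 then (0:ℝ) else 1) * z ^ n = z / (1 - z) := hF.tsum_eq
  rw [hgt, tsum_congr hinner, hFt] at hcp
  have h1z : (0:ℝ) < 1 - z := by linarith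
  have hL : 0 < 1 - Real.log (1 - z) := by
    have he : (1:ℝ) - z < Real.exp 1 := by
      have := Real.exp_one_gt_d9
      norm_num at this
      linarith
    have hll := Real.log_lt_log h1z he
    rw [Real.log_exp] at hll
    linarith
  have hT : ∑' k, f k = z / ((1 - z) * (1 - Real.log (1 - z))) := by
    rw [eq_div_iff (by positivity)]
    calc (∑' k, f k) * ((1 - z) * (1 - Real.log (1 - z)))
        = ((∑' k, f k) * (1 - Real.log (1 - z))) * (1 - z) := by ring
      _ = (z / (1 - z)) * (1 - z) := by rw [hcp]
      _ = z := by field_simp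
  have hfsum : HasSum f (z / ((1 - z) * (1 - Real.log (1 - z)))) := by
    rw [← hT]
    exact hfs.of_norm.hasSum
  have h9 : HasSum (fun n : ℕ => f (n + 1)) (z / ((1 - z) * (1 - Real.log (1 - z)))) := by
    apply (hasSum_nat_add_iff (f := f) 1).mpr
    simp only [Finset.range_one, Finset.sum_singleton]
    have hf0 : f 0 = 0 := by simp [hf, ha]
    rw [hf0, add_zero]
    exact hfsum
  have heq : (fun k : ℕ => p (k + 1) * z ^ (k + 1)) = fun n : ℕ => f (n + 1) := by
    funext k
    rw [hf, ha]
    simp [Nat.succ_ne_zero]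
  rw [heq]
  exact h9
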